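/- arXiv:1211.2611 — 2 statements merged into one kernel-verified Lean document; each statement's English description precedes it below -/
import Mathlib

section
/- Let b be a non-degenerate symmetric bilinear form of degree 0 on a finite-dimensional vector space V, (e_i) a basis of V and (e'_i) the basis determined by b(e'_j, e_i) = δ_{ij}. Then the bracket {Ω, Ω'} = Σ_i (ι_{e_i}Ω ⊙ ι_{e'_i}Ω') on cyclic multilinear forms is independent of the choice of basis (e_i). -/
open Finset

/-- The sign `(-1)^n` for an integer `n`. -/
def sgn (n : ℤ) : ℤ := if Even n then 1 else -1

/-- Koszul sign of a permutation `σ` with respect to degrees `d`: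
the product of `(-1)^(d i * d j)` over all inversions of `σ`. -/
def koszulSign {n : ℕ} (d : Fin n → ℤ) (σ : Equiv.Perm (Fin n)) : ℤ :=
  ∏ p ∈ Finset.univ.filter
      (fun p : Fin n × Fin n => p.1 < p.2 ∧ σ p.2 < σ p.1),
    sgn (d p.1 * d p.2)

variable {K V : Type*} [Field K]

/-- The action of a permutation on a multilinear form, with Koszul signs
computed from the (shifted) degrees of the arguments. -/
def permForm (deg : V → ℤ) {n : ℕ} (Ω : (Fin n → V) → K) (τ : Equiv.Perm (Fin n)) :
    (Fin n → V) → K :=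
  fun x => koszulSign (fun i => deg (x i)) τ • Ω (fun i => x (τ⁻¹ i))

/-- A form is cyclic if it is invariant (with Koszul signs) under the cyclic
permutation of its arguments. -/
def IsCyclicForm (deg : V → ℤ) {n : ℕ} (Ω : (Fin n → V) → K) : Prop :=
  permForm deg Ω (finRotate n) = Ω

/-- Cyclicization of a form: the sum over the cyclic subgroup. -/
def cyclicize (deg : V → ℤ) {n : ℕ} (Ω : (Fin n → V) → K) : (Fin n → V) → K :=
  fun x => ∑ j ∈ Finset.range n, permForm deg Ω ((finRotate n) ^ j) x

/-- Graded tensor product of forms, `bdeg` being the degree of the second form. -/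
def gtensor (deg : V → ℤ) {p q : ℕ} (bdeg : ℤ)
    (A : (Fin p → V) → K) (B : (Fin q → V) → K) : (Fin (p + q) → V) → K :=
  fun x =>
    sgn (bdeg * ∑ i : Fin p, deg (x (Fin.castAdd q i))) •
      (A (fun i => x (Fin.castAdd q i)) * B (fun j => x (Fin.natAdd p j)))

/-- The cyclic product `A ⊙ B = (A ⊗ B)^{Cycl}`. -/
def cyclProd (deg : V → ℤ) {p q : ℕ} (bdeg : ℤ)
    (A : (Fin p → V) → K) (B : (Fin q → V) → K) : (Fin (p + q) → V) → K :=
  cyclicize deg (gtensor deg bdeg A B)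

/-- Contraction `ι_v Ω`: insertion of `v` in the last argument. -/
def contr {n : ℕ} (Ω : (Fin (n + 1) → V) → K) (v : V) : (Fin n → V) → K :=
  fun x => Ω (Fin.snoc x v)

/-- Reindexing a form along an equality of arities. -/
def reForm {n m : ℕ} (h : n = m) (Ω : (Fin n → V) → K) : (Fin m → V) → K :=
  fun x => Ω (fun i => x (Fin.cast h i))


variable [AddCommGroup V] [Module K V]

/-- The trivial grading on an (ungraded) vector space. -/
def deg0 : V → ℤ := fun _ => 0

/-- A cyclic multilinear form. -/
def IsCyclicM {n : ℕ} (Ω : MultilinearMap K (fun _ : Fin n => V) K) : Prop :=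
  IsCyclicForm deg0 (fun x => Ω x)

/-- The bracket `{Ω,Ω'} = Σ_i ι_{e_i}Ω ⊙ ι_{e'_i}Ω'` computed in the basis `(e_i)`
with `b`-dual family `(e'_i)`. -/
def puPoint {m k k' : ℕ} (e e' : Fin m → V)
    (Ω : MultilinearMap K (fun _ : Fin (k + 1) => V) K)
    (Ω' : MultilinearMap K (fun _ : Fin (k' + 1) => V) K) :
    (Fin (k + k') → V) → K :=
  fun x => ∑ i : Fin m,
    cyclProd deg0 0 (contr (fun y => Ω y) (e i)) (contr (fun y => Ω' y) (e' i)) x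

section Aux

lemma sgn_zero : sgn 0 = 1 := by simp [sgn]

lemma koszulSign_deg0 {m : ℕ} (σ : Equiv.Perm (Fin m)) :
    koszulSign (fun _ => (0 : ℤ)) σ = 1 := by
  simp [koszulSign, sgn_zero]

/-- Unfolding of the cyclic product with trivial grading. -/
lemma cyclProd_deg0 {p q : ℕ} (A : (Fin p → V) → K) (B : (Fin q → V) → K)
    (x : Fin (p + q) → V) :
    cyclProd (deg0 : V → ℤ) 0 A B x
      = ∑ j ∈ Finset.range (p + q),
          A (fun i => x ((((finRotate (p + q)) ^ j)⁻¹) (Fin.castAdd q i))) *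
          B (fun i => x ((((finRotate (p + q)) ^ j)⁻¹) (Fin.natAdd p i))) := by
  unfold cyclProd cyclicize permForm gtensor
  simp [koszulSign_deg0, deg0, sgn_zero]

lemma snoc_eq_update {m : ℕ} (y : Fin m → V) (v u : V) :
    (Fin.snoc y u : Fin (m + 1) → V)
      = Function.update (Fin.snoc y v) (Fin.last m) u := by
  funext i
  refine Fin.lastCases ?_ (fun j => ?_) i
  · simp
  · have : (j.castSucc : Fin (m + 1)) ≠ Fin.last m := Fin.ne_of_lt (Fin.castSucc_lt_last j)
    simp [this]

lemma map_snoc_add {m : ℕ} (Ω : MultilinearMap K (fun _ : Fin (m + 1) => V) K)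
    (y : Fin m → V) (v w : V) :
    Ω (Fin.snoc y (v + w)) = Ω (Fin.snoc y v) + Ω (Fin.snoc y w) := by
  rw [snoc_eq_update y v (v + w), MultilinearMap.map_update_add,
    ← snoc_eq_update y v v, ← snoc_eq_update y v w]

lemma map_snoc_smul {m : ℕ} (Ω : MultilinearMap K (fun _ : Fin (m + 1) => V) K)
    (y : Fin m → V) (c : K) (v : V) :
    Ω (Fin.snoc y (c • v)) = c • Ω (Fin.snoc y v) := by
  rw [snoc_eq_update y v (c • v), MultilinearMap.map_update_smul,
    ← snoc_eq_update y v v]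

/-- For any bilinear form `T`, the sum `Σ_i T (e i) (e' i)` over a basis and its
`b`-dual family does not depend on the basis. -/
lemma sum_dual_pair_indep [FiniteDimensional K V] {n : ℕ}
    (b : V →ₗ[K] V →ₗ[K] K)
    (hnd : ∀ x, (∀ y, b x y = 0) → x = 0)
    (e : Module.Basis (Fin n) K V) (f : Module.Basis (Fin n) K V)
    (e' f' : Fin n → V)
    (he' : ∀ i j, b (e' j) (e i) = if i = j then 1 else 0)
    (hf' : ∀ i j, b (f' j) (f i) = if i = j then 1 else 0)
    (T : V →ₗ[K] V →ₗ[K] K) :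
    ∑ i : Fin n, T (f i) (f' i) = ∑ i : Fin n, T (e i) (e' i) := by
  -- coordinates of anything against the `b`-dual family of `f` are `f`-coordinates
  have hcoord : ∀ (i : Fin n) (y : V), b (f' i) y = f.repr y i := by
    intro i y
    conv_lhs => rw [← f.sum_repr y]
    rw [map_sum]
    simp [map_sum, map_smul, hf', smul_eq_mul, mul_ite]
  -- hence `Σ_i b (f' i) y • f i = y`
  have hfact1 : ∀ y : V, (∑ i : Fin n, b (f' i) y • f i) = y := by
    intro y
    calc (∑ i : Fin n, b (f' i) y • f i) = ∑ i : Fin n, f.repr y i • f i := by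
          refine Finset.sum_congr rfl fun i _ => by rw [hcoord]
      _ = y := f.sum_repr y
  -- expansion of `f' i` in the family `e'`
  have hfact2 : ∀ i : Fin n, f' i = ∑ j : Fin n, b (f' i) (e j) • e' j := by
    intro i
    set u : V := f' i - ∑ j : Fin n, b (f' i) (e j) • e' j with hu
    have hbu : b u = 0 := by
      apply e.ext
      intro j
      have h1 : b u (e j)
          = b (f' i) (e j) - ∑ l : Fin n, b (f' i) (e l) * b (e' l) (e j) := by
        simp [hu, map_sum, map_smul, smul_eq_mul]
      rw [LinearMap.zero_apply, h1]
      have h2 : (∑ l : Fin n, b (f' i) (e l) * b (e' l) (e j)) = b (f' i) (e j) := by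
        simp [he', mul_ite]
      rw [h2, sub_self]
    have hu0 : u = 0 := hnd u (fun y => by rw [hbu]; rfl)
    exact (sub_eq_zero.mp hu0)
  calc ∑ i : Fin n, T (f i) (f' i)
      = ∑ i : Fin n, ∑ j : Fin n, b (f' i) (e j) • T (f i) (e' j) := by
        refine Finset.sum_congr rfl fun i _ => ?_
        have h := congrArg (T (f i)) (hfact2 i)
        simpa [map_sum, map_smul] using h
    _ = ∑ j : Fin n, T (∑ i : Fin n, b (f' i) (e j) • f i) (e' j) := by
        rw [Finset.sum_comm]
        refine Finset.sum_congr rfl fun j _ => ?_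
        simp [map_sum, map_smul]
    _ = ∑ j : Fin n, T (e j) (e' j) := by
        refine Finset.sum_congr rfl fun j _ => ?_
        rw [hfact1 (e j)]

end Aux

/-- The bracket `{Ω,Ω'} = Σ_i ι_{e_i}Ω ⊙ ι_{e'_i}Ω'`, where `(e_i)`
is a basis of `V` and `(e'_i)` is determined by `b(e'_j, e_i) = δ_{ij}` for a
non-degenerate symmetric bilinear form `b`, does not depend on the choice of
the basis `(e_i)`. -/
theorem puBracket_basis_independent [FiniteDimensional K V] {n : ℕ}
    (b : V →ₗ[K] V →ₗ[K] K)
    (hsymm : ∀ x y, b x y = b y x)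
    (hnd : ∀ x, (∀ y, b x y = 0) → x = 0)
    (e : Module.Basis (Fin n) K V) (f : Module.Basis (Fin n) K V)
    (e' f' : Fin n → V)
    (he' : ∀ i j, b (e' j) (e i) = if i = j then 1 else 0)
    (hf' : ∀ i j, b (f' j) (f i) = if i = j then 1 else 0)
    {k k' : ℕ}
    (Ω : MultilinearMap K (fun _ : Fin (k + 1) => V) K)
    (Ω' : MultilinearMap K (fun _ : Fin (k' + 1) => V) K)
    (hΩ : IsCyclicM Ω) (hΩ' : IsCyclicM Ω') :
    puPoint (fun i => e i) e' Ω Ω' = puPoint (fun i => f i) f' Ω Ω' := by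
  funext x
  -- the bracket integrand is bilinear in the pair `(v, w)`
  set G : V → V → K := fun v w =>
    cyclProd deg0 0 (contr (fun y => Ω y) v) (contr (fun y => Ω' y) w) x with hG
  have hGeq : ∀ v w, G v w
      = ∑ j ∈ Finset.range (k + k'),
          Ω (Fin.snoc (fun i => x ((((finRotate (k + k')) ^ j)⁻¹) (Fin.castAdd k' i))) v) *
          Ω' (Fin.snoc (fun i => x ((((finRotate (k + k')) ^ j)⁻¹) (Fin.natAdd k i))) w) := by
    intro v w
    simp only [hG]
    rw [cyclProd_deg0]
    rfl
  have haddl : ∀ v₁ v₂ w, G (v₁ + v₂) w = G v₁ w + G v₂ w := by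
    intro v₁ v₂ w
    simp only [hGeq, map_snoc_add, add_mul, Finset.sum_add_distrib]
  have hsmull : ∀ (c : K) v w, G (c • v) w = c • G v w := by
    intro c v w
    simp only [hGeq, map_snoc_smul, smul_eq_mul, Finset.mul_sum, mul_assoc]
  have haddr : ∀ v w₁ w₂, G v (w₁ + w₂) = G v w₁ + G v w₂ := by
    intro v w₁ w₂
    simp only [hGeq, map_snoc_add, mul_add, Finset.sum_add_distrib]
  have hsmulr : ∀ (c : K) v w, G v (c • w) = c • G v w := by
    intro c v w
    simp only [hGeq, map_snoc_smul, smul_eq_mul, Finset.mul_sum]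
    refine Finset.sum_congr rfl fun j _ => by ring
  set T : V →ₗ[K] V →ₗ[K] K :=
    LinearMap.mk₂ K G haddl hsmull haddr hsmulr with hT
  have hTapp : ∀ v w, T v w = G v w := fun v w => rfl
  have key := sum_dual_pair_indep b hnd e f e' f' he' hf' T
  show puPoint (fun i => e i) e' Ω Ω' x = puPoint (fun i => f i) f' Ω Ω' x
  unfold puPoint
  calc (∑ i : Fin n,
        cyclProd deg0 0 (contr (fun y => Ω y) (e i)) (contr (fun y => Ω' y) (e' i)) x)
      = ∑ i : Fin n, T (e i) (e' i) := rfl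
    _ = ∑ i : Fin n, T (f i) (f' i) := key.symm
    _ = _ := rfl
end

section
/- Let (V,q) be a Lie algebra and M a finite-dimensional V-module. Then Ṽ = V × M × V* × M* with bracket q̃((x,a,g,h),(x',a',g',h')) = ([x,x'], x·a' − x'·a, x·g' − x'·g + a·h' − a'·h, x·h' − x'·h) is a Lie algebra, the bilinear form b̃((x,a,g,h),(x',a',g',h')) = g(x') + h(a') + g'(x) + h'(a) is symmetric, non-degenerate and invariant (b̃(q̃(u,v),w) = b̃(u,q̃(v,w))), so (Ṽ, b̃, q̃) is a quadratic Lie algebra. -/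
open LinearMap

attribute [local instance 100] LieRing.ofAssociativeRing

variable {K V M : Type*} [Field K]
  [LieRing V] [LieAlgebra K V]
  [AddCommGroup M] [Module K M] [LieRingModule V M] [LieModule K V M]

/-- The double semi-direct product `Ṽ = V × M × V* × M*` of a Lie algebra `V`
by a module `M`. -/
abbrev LieDblExt (K V M : Type*) [Field K] [LieRing V] [LieAlgebra K V]
    [AddCommGroup M] [Module K M] :=
  V × M × Module.Dual K V × Module.Dual K M

/-- The bracket
`q̃((x,a,g,h),(x',a',g',h')) = ([x,x'], x·a' − x'·a,
  x·g' − x'·g + a·h' − a'·h, x·h' − x'·h)` on `Ṽ = V × M × V* × M*`, where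
`(x·g)(z) = g([z,x])`, `(a·h)(z) = h([z,a])` and `(x·h)(c) = −h([x,c])`. -/
def qLie (u v : LieDblExt K V M) : LieDblExt K V M :=
  (⁅u.1, v.1⁆,
   ⁅u.1, v.2.1⁆ - ⁅v.1, u.2.1⁆,
   v.2.2.1 ∘ₗ (-(LieAlgebra.ad K V u.1 : V →ₗ[K] V))
     - u.2.2.1 ∘ₗ (-(LieAlgebra.ad K V v.1 : V →ₗ[K] V))
     + v.2.2.2 ∘ₗ ((LieModule.toEnd K V M).toLinearMap.flip u.2.1)
     - u.2.2.2 ∘ₗ ((LieModule.toEnd K V M).toLinearMap.flip v.2.1),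
   - (v.2.2.2 ∘ₗ (LieModule.toEnd K V M u.1 : M →ₗ[K] M))
     + u.2.2.2 ∘ₗ (LieModule.toEnd K V M v.1 : M →ₗ[K] M))

/-- The bilinear form
`b̃((x,a,g,h),(x',a',g',h')) = g(x') + h(a') + g'(x) + h'(a)`. -/
def bLie (u v : LieDblExt K V M) : K :=
  u.2.2.1 v.1 + u.2.2.2 v.2.1 + v.2.2.1 u.1 + v.2.2.2 u.2.1


lemma lieJacComp1 {V : Type*} [LieRing V] (a b c : V) :
    ⁅⁅a, b⁆, c⁆ + ⁅⁅b, c⁆, a⁆ + ⁅⁅c, a⁆, b⁆ = 0 := by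
  rw [← lie_skew ⁅a, b⁆ c, ← lie_skew ⁅b, c⁆ a, ← lie_skew ⁅c, a⁆ b]
  rw [show (-⁅c, ⁅a, b⁆⁆ + -⁅a, ⁅b, c⁆⁆ + -⁅b, ⁅c, a⁆⁆ : V)
      = -(⁅a, ⁅b, c⁆⁆ + ⁅b, ⁅c, a⁆⁆ + ⁅c, ⁅a, b⁆⁆) from by abel, lie_jacobi, neg_zero]

/-- For a Lie algebra `V` and a finite-dimensional module `M`,
`Ṽ = V × M × V* × M*` with the bracket `q̃` is a Lie algebra, and `b̃` is a
symmetric, non-degenerate, invariant bilinear form: `(Ṽ, b̃, q̃)` is a quadratic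
Lie algebra. -/
theorem double_semidirect_product_quadratic_Lie
    [FiniteDimensional K V] [FiniteDimensional K M] :
    (∀ u v : LieDblExt K V M, qLie u v = - qLie v u) ∧
    (∀ u v w : LieDblExt K V M,
        qLie (qLie u v) w + qLie (qLie v w) u + qLie (qLie w u) v = 0) ∧
    (∀ u v : LieDblExt K V M, bLie u v = bLie v u) ∧
    (∀ u : LieDblExt K V M, (∀ v, bLie u v = 0) → u = 0) ∧
    (∀ u v w : LieDblExt K V M, bLie (qLie u v) w = bLie u (qLie v w)) := by
  refine ⟨?_, ?_, ?_, ?_, ?_⟩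
  · intro u v
    simp only [qLie, Prod.neg_mk, Prod.mk.injEq]
    refine ⟨(lie_skew _ _).symm, by abel, by ext z; simp; try abel, by ext c; simp; try abel⟩
  · intro u v w
    simp only [qLie, Prod.mk_add_mk, Prod.mk_eq_zero]
    refine ⟨lieJacComp1 u.1 v.1 w.1, by simp [lie_lie, lie_sub, sub_lie]; abel, ?_, ?_⟩
    · ext z
      simp [lie_lie, lie_sub, sub_lie, lie_neg, neg_lie, lie_add,
        LieModule.toEnd_apply_apply]
      abel
    · ext c
      simp [lie_lie, lie_sub, sub_lie, lie_neg, neg_lie, LieModule.toEnd_apply_apply]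
      abel
  · intro u v
    simp only [bLie]
    abel
  · rintro ⟨x, a, g, h⟩ H
    have hx : x = 0 := (Module.forall_dual_apply_eq_zero_iff K x).mp fun φ => by
      simpa [bLie] using H (0, 0, φ, 0)
    have ha : a = 0 := (Module.forall_dual_apply_eq_zero_iff K a).mp fun ψ => by
      simpa [bLie] using H (0, 0, 0, ψ)
    have hg : g = 0 := LinearMap.ext fun y => by simpa [bLie] using H (y, 0, 0, 0)
    have hh : h = 0 := LinearMap.ext fun m => by simpa [bLie] using H (0, m, 0, 0)
    simp [hx, ha, hg, hh]
  · intro u v w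
    simp [bLie, qLie, LieModule.toEnd_apply_apply]
    rw [← lie_skew u.1 v.1, ← lie_skew u.1 w.1, ← lie_skew v.1 w.1]
    simp only [map_neg]
    abel
end
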